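/- In any cut-free derivation in !L* of a sequent of size n in which ! is applied only to variables, the number of applications of the contraction rule is less than 2n. -/

import Mathlib

/-- Formulae (types) of the Lambek calculus with a modality:
`var` = primitive type, `div B A` = B / A, `ldiv A B` = A \ B, `bang A` = !A. -/
inductive Fm : Type
  | var : ℕ → Fm
  | div : Fm → Fm → Fm
  | ldiv : Fm → Fm → Fm
  | bang : Fm → Fm
  deriving DecidableEq

open Fm

/-- The size of a formula: the total number of variable and connective occurrences. -/
def Fm.size : Fm → ℕ
  | var _ => 1
  | div a b => a.size + b.size + 1
  | ldiv a b => a.size + b.size + 1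
  | bang a => a.size + 1

/-- The size of a sequent Φ → C. -/
def seqSize (Φ : List Fm) (C : Fm) : ℕ := (Φ.map Fm.size).sum + C.size

/-- `!` is applied only to variables (primitive types) in the formula. -/
def bangVar : Fm → Prop
  | var _ => True
  | div a b => bangVar a ∧ bangVar b
  | ldiv a b => bangVar a ∧ bangVar b
  | bang a => ∃ n : ℕ, a = var n

/-- Cut-free derivation trees in !L*. -/
inductive BangD : List Fm → Fm → Type
  | ax (A : Fm) : BangD [A] A
  | divL (Γ Δ₁ Δ₂ : List Fm) (A B C : Fm) :
      BangD Γ A → BangD (Δ₁ ++ B :: Δ₂) C →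
      BangD (Δ₁ ++ div B A :: (Γ ++ Δ₂)) C
  | divR (Γ : List Fm) (A B : Fm) :
      BangD (Γ ++ [A]) B → BangD Γ (div B A)
  | ldivL (Γ Δ₁ Δ₂ : List Fm) (A B C : Fm) :
      BangD Γ A → BangD (Δ₁ ++ B :: Δ₂) C →
      BangD (Δ₁ ++ Γ ++ ldiv A B :: Δ₂) C
  | ldivR (Γ : List Fm) (A B : Fm) :
      BangD (A :: Γ) B → BangD Γ (ldiv A B)
  | bangL (Γ₁ Γ₂ : List Fm) (A C : Fm) :
      BangD (Γ₁ ++ A :: Γ₂) C → BangD (Γ₁ ++ bang A :: Γ₂) C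
  | bangR (Γ : List Fm) (B : Fm) :
      BangD (Γ.map bang) B → BangD (Γ.map bang) (bang B)
  | perm1 (Δ₁ Γ Δ₂ : List Fm) (A C : Fm) :
      BangD (Δ₁ ++ bang A :: (Γ ++ Δ₂)) C → BangD (Δ₁ ++ Γ ++ bang A :: Δ₂) C
  | perm2 (Δ₁ Γ Δ₂ : List Fm) (A C : Fm) :
      BangD (Δ₁ ++ Γ ++ bang A :: Δ₂) C → BangD (Δ₁ ++ bang A :: (Γ ++ Δ₂)) C
  | contr (Δ₁ Δ₂ : List Fm) (A C : Fm) :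
      BangD (Δ₁ ++ bang A :: bang A :: Δ₂) C → BangD (Δ₁ ++ bang A :: Δ₂) C

/-- Number of applications of logical rules (all rules except permutation and contraction). -/
def BangD.logicalCount : ∀ {Φ : List Fm} {C : Fm}, BangD Φ C → ℕ
  | _, _, BangD.ax _ => 0
  | _, _, BangD.divL _ _ _ _ _ _ d e => d.logicalCount + e.logicalCount + 1
  | _, _, BangD.divR _ _ _ d => d.logicalCount + 1
  | _, _, BangD.ldivL _ _ _ _ _ _ d e => d.logicalCount + e.logicalCount + 1
  | _, _, BangD.ldivR _ _ _ d => d.logicalCount + 1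
  | _, _, BangD.bangL _ _ _ _ d => d.logicalCount + 1
  | _, _, BangD.bangR _ _ d => d.logicalCount + 1
  | _, _, BangD.perm1 _ _ _ _ _ d => d.logicalCount
  | _, _, BangD.perm2 _ _ _ _ _ d => d.logicalCount
  | _, _, BangD.contr _ _ _ _ d => d.logicalCount

/-- Number of applications of the contraction rule. -/
def BangD.contrCount : ∀ {Φ : List Fm} {C : Fm}, BangD Φ C → ℕ
  | _, _, BangD.ax _ => 0
  | _, _, BangD.divL _ _ _ _ _ _ d e => d.contrCount + e.contrCount
  | _, _, BangD.divR _ _ _ d => d.contrCount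
  | _, _, BangD.ldivL _ _ _ _ _ _ d e => d.contrCount + e.contrCount
  | _, _, BangD.ldivR _ _ _ d => d.contrCount
  | _, _, BangD.bangL _ _ _ _ d => d.contrCount
  | _, _, BangD.bangR _ _ d => d.contrCount
  | _, _, BangD.perm1 _ _ _ _ _ d => d.contrCount
  | _, _, BangD.perm2 _ _ _ _ _ d => d.contrCount
  | _, _, BangD.contr _ _ _ _ d => d.contrCount + 1

/-- The total size of a derivation: the number of axiom instances and rule
applications (i.e. of sequent occurrences) in it. -/
def BangD.dsize : ∀ {Φ : List Fm} {C : Fm}, BangD Φ C → ℕ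
  | _, _, BangD.ax _ => 1
  | _, _, BangD.divL _ _ _ _ _ _ d e => d.dsize + e.dsize + 1
  | _, _, BangD.divR _ _ _ d => d.dsize + 1
  | _, _, BangD.ldivL _ _ _ _ _ _ d e => d.dsize + e.dsize + 1
  | _, _, BangD.ldivR _ _ _ d => d.dsize + 1
  | _, _, BangD.bangL _ _ _ _ d => d.dsize + 1
  | _, _, BangD.bangR _ _ d => d.dsize + 1
  | _, _, BangD.perm1 _ _ _ _ _ d => d.dsize + 1
  | _, _, BangD.perm2 _ _ _ _ _ d => d.dsize + 1
  | _, _, BangD.contr _ _ _ _ d => d.dsize + 1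

/-- Number of `/` and `\` connective occurrences in a formula. -/
def Fm.dc : Fm → ℕ
  | var _ => 0
  | div a b => a.dc + b.dc + 1
  | ldiv a b => a.dc + b.dc + 1
  | bang a => a.dc

def dcs (Φ : List Fm) (C : Fm) : ℕ := (Φ.map Fm.dc).sum + C.dc

/-- Number of axiom leaves. -/
def BangD.leafCount : ∀ {Φ : List Fm} {C : Fm}, BangD Φ C → ℕ
  | _, _, BangD.ax _ => 1
  | _, _, BangD.divL _ _ _ _ _ _ d e => d.leafCount + e.leafCount
  | _, _, BangD.divR _ _ _ d => d.leafCount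
  | _, _, BangD.ldivL _ _ _ _ _ _ d e => d.leafCount + e.leafCount
  | _, _, BangD.ldivR _ _ _ d => d.leafCount
  | _, _, BangD.bangL _ _ _ _ d => d.leafCount
  | _, _, BangD.bangR _ _ d => d.leafCount
  | _, _, BangD.perm1 _ _ _ _ _ d => d.leafCount
  | _, _, BangD.perm2 _ _ _ _ _ d => d.leafCount
  | _, _, BangD.contr _ _ _ _ d => d.leafCount

/-- Number of right division rules. -/
def BangD.rightCount : ∀ {Φ : List Fm} {C : Fm}, BangD Φ C → ℕ
  | _, _, BangD.ax _ => 0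
  | _, _, BangD.divL _ _ _ _ _ _ d e => d.rightCount + e.rightCount
  | _, _, BangD.divR _ _ _ d => d.rightCount + 1
  | _, _, BangD.ldivL _ _ _ _ _ _ d e => d.rightCount + e.rightCount
  | _, _, BangD.ldivR _ _ _ d => d.rightCount + 1
  | _, _, BangD.bangL _ _ _ _ d => d.rightCount
  | _, _, BangD.bangR _ _ d => d.rightCount
  | _, _, BangD.perm1 _ _ _ _ _ d => d.rightCount
  | _, _, BangD.perm2 _ _ _ _ _ d => d.rightCount
  | _, _, BangD.contr _ _ _ _ d => d.rightCount

/-- Number of binary (left division) rules. -/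
def BangD.binCount : ∀ {Φ : List Fm} {C : Fm}, BangD Φ C → ℕ
  | _, _, BangD.ax _ => 0
  | _, _, BangD.divL _ _ _ _ _ _ d e => d.binCount + e.binCount + 1
  | _, _, BangD.divR _ _ _ d => d.binCount
  | _, _, BangD.ldivL _ _ _ _ _ _ d e => d.binCount + e.binCount + 1
  | _, _, BangD.ldivR _ _ _ d => d.binCount
  | _, _, BangD.bangL _ _ _ _ d => d.binCount
  | _, _, BangD.bangR _ _ d => d.binCount
  | _, _, BangD.perm1 _ _ _ _ _ d => d.binCount
  | _, _, BangD.perm2 _ _ _ _ _ d => d.binCount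
  | _, _, BangD.contr _ _ _ _ d => d.binCount

lemma count_L1 {Φ : List Fm} {C : Fm} (d : BangD Φ C) :
    Φ.length + d.contrCount + d.rightCount = d.leafCount := by
  induction d <;>
    simp_all [BangD.contrCount, BangD.rightCount, BangD.leafCount] <;> omega

lemma count_L2 {Φ : List Fm} {C : Fm} (d : BangD Φ C) :
    d.leafCount ≤ d.binCount + 1 := by
  induction d <;>
    simp_all [BangD.leafCount, BangD.binCount] <;> omega

lemma count_L3 {Φ : List Fm} {C : Fm} (d : BangD Φ C)
    (hΦ : ∀ F ∈ Φ, bangVar F) (hC : bangVar C) :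
    d.binCount + d.rightCount ≤ dcs Φ C := by
  induction d with
  | ax A => simp [BangD.binCount, BangD.rightCount, dcs]
  | divL Γ Δ₁ Δ₂ A B C d e ihd ihe =>
    have hd : bangVar B ∧ bangVar A := hΦ (div B A) (by simp)
    have h1 := ihd (fun F hF => hΦ F (by simp [hF])) hd.2
    have h2 := ihe (fun F hF => by
        simp only [List.mem_append, List.mem_cons] at hF
        rcases hF with h | h | h
        · exact hΦ F (by simp [h])
        · exact h ▸ hd.1
        · exact hΦ F (by simp [h])) hC
    simp only [BangD.binCount, BangD.rightCount, dcs, List.map_append, List.sum_append,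
      List.map_cons, List.sum_cons, Fm.dc] at *
    omega
  | divR Γ A B d ih =>
    have hd : bangVar B ∧ bangVar A := hC
    have h1 := ih (fun F hF => by
        simp only [List.mem_append, List.mem_cons] at hF
        rcases hF with h | h
        · exact hΦ F h
        · simp at h; exact h ▸ hd.2) hd.1
    simp only [BangD.binCount, BangD.rightCount, dcs, List.map_append, List.sum_append,
      List.map_cons, List.sum_cons, List.map_nil, List.sum_nil, Fm.dc] at *
    omega
  | ldivL Γ Δ₁ Δ₂ A B C d e ihd ihe =>
    have hd : bangVar A ∧ bangVar B := hΦ (ldiv A B) (by simp)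
    have h1 := ihd (fun F hF => hΦ F (by simp [hF])) hd.1
    have h2 := ihe (fun F hF => by
        simp only [List.mem_append, List.mem_cons] at hF
        rcases hF with h | h | h
        · exact hΦ F (by simp [h])
        · exact h ▸ hd.2
        · exact hΦ F (by simp [h])) hC
    simp only [BangD.binCount, BangD.rightCount, dcs, List.map_append, List.sum_append,
      List.map_cons, List.sum_cons, Fm.dc] at *
    omega
  | ldivR Γ A B d ih =>
    have hd : bangVar A ∧ bangVar B := hC
    have h1 := ih (fun F hF => by
        rcases List.mem_cons.1 hF with h | h
        · exact h ▸ hd.1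
        · exact hΦ F h) hd.2
    simp only [BangD.binCount, BangD.rightCount, dcs, List.map_cons, List.sum_cons,
      Fm.dc] at *
    omega
  | bangL Γ₁ Γ₂ A C d ih =>
    have hd : ∃ n, A = var n := hΦ (bang A) (by simp)
    obtain ⟨n, rfl⟩ := hd
    have h1 := ih (fun F hF => by
        simp only [List.mem_append, List.mem_cons] at hF
        rcases hF with h | h | h
        · exact hΦ F (by simp [h])
        · exact h ▸ trivial
        · exact hΦ F (by simp [h])) hC
    simp only [BangD.binCount, BangD.rightCount, dcs, List.map_append, List.sum_append,
      List.map_cons, List.sum_cons, Fm.dc] at *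
    omega
  | bangR Γ B d ih =>
    have hd : ∃ n, B = var n := hC
    obtain ⟨n, rfl⟩ := hd
    have h1 := ih hΦ trivial
    simp only [BangD.binCount, BangD.rightCount, dcs, Fm.dc] at *
    omega
  | perm1 Δ₁ Γ Δ₂ A C d ih =>
    have h1 := ih (fun F hF => by
        apply hΦ F
        simp only [List.mem_append, List.mem_cons] at hF ⊢
        tauto) hC
    simp only [BangD.binCount, BangD.rightCount, dcs, List.map_append, List.sum_append,
      List.map_cons, List.sum_cons, Fm.dc] at *
    omega
  | perm2 Δ₁ Γ Δ₂ A C d ih =>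
    have h1 := ih (fun F hF => by
        apply hΦ F
        simp only [List.mem_append, List.mem_cons] at hF ⊢
        tauto) hC
    simp only [BangD.binCount, BangD.rightCount, dcs, List.map_append, List.sum_append,
      List.map_cons, List.sum_cons, Fm.dc] at *
    omega
  | contr Δ₁ Δ₂ A C d ih =>
    have hd : ∃ n, A = var n := hΦ (bang A) (by simp)
    obtain ⟨n, rfl⟩ := hd
    have h1 := ih (fun F hF => by
        simp only [List.mem_append, List.mem_cons] at hF
        rcases hF with h | h | h | h
        · exact hΦ F (by simp [h])
        · exact h ▸ ⟨n, rfl⟩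
        · exact h ▸ ⟨n, rfl⟩
        · exact hΦ F (by simp [h])) hC
    simp only [BangD.binCount, BangD.rightCount, dcs, List.map_append, List.sum_append,
      List.map_cons, List.sum_cons, Fm.dc] at *
    omega

lemma dc_lt_size (F : Fm) : F.dc < F.size := by
  induction F <;> simp_all [Fm.dc, Fm.size] <;> omega

lemma dcs_lt_seqSize (Φ : List Fm) (C : Fm) : dcs Φ C < seqSize Φ C := by
  have h1 : (Φ.map Fm.dc).sum ≤ (Φ.map Fm.size).sum := by
    induction Φ with
    | nil => simp
    | cons a l ih => simp; have := dc_lt_size a; omega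
  have := dc_lt_size C
  simp [dcs, seqSize]; omega

/-- In any cut-free !L* derivation of a sequent of size n in which ! is applied
only to variables, the number of contraction applications is less than 2n. -/
theorem stmt13 (Φ : List Fm) (C : Fm) (d : BangD Φ C)
    (h : ∀ F ∈ C :: Φ, bangVar F) :
    d.contrCount < 2 * seqSize Φ C := by
  have h1 := count_L1 d
  have h2 := count_L2 d
  have h3 := count_L3 d (fun F hF => h F (List.mem_cons_of_mem _ hF)) (h C List.mem_cons_self)
  have h4 := dcs_lt_seqSize Φ C
  omega
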